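/- Let A be a φ-algebra with multiplicative identity e. If A is a Wickstead algebra (every band preserving linear operator on A is order bounded), then A is a Kadison algebra (every local 2-multiplier on A² is a 2-multiplier). -/

import Mathlib

/-- A linear operator `T` is band preserving if `|x| ⊓ |y| = 0` implies `|T x| ⊓ |y| = 0`. -/
def IsBandPreserving {A : Type*} [CommRing A] [Lattice A] [Algebra ℝ A]
    (T : A →ₗ[ℝ] A) : Prop :=
  ∀ x y : A, |x| ⊓ |y| = 0 → |T x| ⊓ |y| = 0

/-- `T` is order bounded if it maps order bounded sets to order bounded sets. -/
def IsOrderBounded {A : Type*} [CommRing A] [Lattice A] [Algebra ℝ A]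
    (T : A →ₗ[ℝ] A) : Prop :=
  ∀ s : Set A, (∃ a b : A, s ⊆ Set.Icc a b) → ∃ l u : A, T '' s ⊆ Set.Icc l u

/-- An orthomorphism is an order bounded band preserving operator. -/
def IsOrthomorphism {A : Type*} [CommRing A] [Lattice A] [Algebra ℝ A]
    (T : A →ₗ[ℝ] A) : Prop :=
  IsBandPreserving T ∧ IsOrderBounded T

/-- A bilinear map is separately band preserving if all its partial maps are band
preserving. -/
def SepBandPreserving {A : Type*} [CommRing A] [Lattice A] [Algebra ℝ A]
    (Ψ : A →ₗ[ℝ] A →ₗ[ℝ] A) : Prop :=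
  ∀ a : A, (∀ x y : A, |x| ⊓ |y| = 0 → |Ψ a x| ⊓ |y| = 0) ∧
    (∀ x y : A, |x| ⊓ |y| = 0 → |Ψ x a| ⊓ |y| = 0)

/-- A linear map `T : A → A` is a multiplier if `T(ab) = aT(b)` for all `a, b ∈ A`. -/
def IsMultiplier {A : Type*} [CommRing A] [Algebra ℝ A] (T : A →ₗ[ℝ] A) : Prop :=
  ∀ a b : A, T (a * b) = a * T b

/-- A bilinear map `Ψ : A × A → A` is a 2-multiplier if for each `a ∈ A` the partial maps
`x ↦ Ψ(a,x)` and `x ↦ Ψ(x,a)` are multipliers. -/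
def Is2Multiplier {A : Type*} [CommRing A] [Algebra ℝ A] (Ψ : A →ₗ[ℝ] A →ₗ[ℝ] A) : Prop :=
  ∀ a : A, (∀ x y : A, Ψ a (x * y) = x * Ψ a y) ∧ (∀ x y : A, Ψ (x * y) a = x * Ψ y a)

/-- A bilinear map `Ψ` is a local 2-multiplier if for each `(a,b) ∈ A²` there is a
2-multiplier `Ψ_{a,b}` with `Ψ(a,b) = Ψ_{a,b}(a,b)`. -/
def IsLocal2Multiplier {A : Type*} [CommRing A] [Algebra ℝ A]
    (Ψ : A →ₗ[ℝ] A →ₗ[ℝ] A) : Prop :=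
  ∀ a b : A, ∃ Ψ' : A →ₗ[ℝ] A →ₗ[ℝ] A, Is2Multiplier Ψ' ∧ Ψ a b = Ψ' a b

/-- `A` is a Wickstead algebra if every band preserving linear operator on `A` is order
bounded. -/
def IsWickstead (A : Type*) [CommRing A] [Lattice A] [Algebra ℝ A] : Prop :=
  ∀ T : A →ₗ[ℝ] A, IsBandPreserving T → IsOrderBounded T

/-- `A` is a Kadison algebra if every local 2-multiplier on `A²` is a 2-multiplier. -/
def IsKadison (A : Type*) [CommRing A] [Algebra ℝ A] : Prop :=
  ∀ Ψ : A →ₗ[ℝ] A →ₗ[ℝ] A, IsLocal2Multiplier Ψ → Is2Multiplier Ψ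


set_option linter.unusedSectionVars false
set_option linter.unusedVariables false
set_option maxHeartbeats 1000000

section AuxPhi
variable {A : Type*} [CommRing A] [Lattice A] [Algebra ℝ A]
variable [AddLeftMono A] [AddRightMono A]

lemma aux_smul_mono (hsp : ∀ (r : ℝ) (a : A), 0 ≤ r → 0 ≤ a → 0 ≤ r • a)
    {r : ℝ} (hr : 0 ≤ r) {a b : A} (h : a ≤ b) : r • a ≤ r • b := by
  have := hsp r (b - a) hr (sub_nonneg.2 h)
  rw [smul_sub] at this
  exact sub_nonneg.1 this

lemma aux_mul_mono (hmp : ∀ a b : A, 0 ≤ a → 0 ≤ b → 0 ≤ a * b)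
    {c : A} (hc : 0 ≤ c) {a b : A} (h : a ≤ b) : c * a ≤ c * b := by
  have := hmp c (b - a) hc (sub_nonneg.2 h)
  rw [mul_sub] at this
  exact sub_nonneg.1 this

lemma aux_mul_eq_zero (hfalg : ∀ a b c : A, a ⊓ b = 0 → 0 ≤ c → (c * a) ⊓ b = 0)
    {a b : A} (ha : 0 ≤ a) (hb : 0 ≤ b) (hab : a ⊓ b = 0) : a * b = 0 := by
  have h1 : (b * a) ⊓ b = 0 := hfalg a b b hab hb
  have h1' : b ⊓ (b * a) = 0 := by rw [inf_comm]; exact h1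
  have h2 : (a * b) ⊓ (b * a) = 0 := hfalg b (b * a) a h1' ha
  rw [mul_comm b a, inf_idem] at h2
  exact h2

lemma aux_one_nonneg (hmp : ∀ a b : A, 0 ≤ a → 0 ≤ b → 0 ≤ a * b)
    (hfalg : ∀ a b c : A, a ⊓ b = 0 → 0 ≤ c → (c * a) ⊓ b = 0) : (0 : A) ≤ 1 := by
  have h : (1 : A)⁺ * (1 : A)⁻ = 0 :=
    aux_mul_eq_zero hfalg (posPart_nonneg _) (negPart_nonneg _) (posPart_inf_negPart_eq_zero 1)
  have h2 : (1 : A)⁻ = -((1 : A)⁻ * (1 : A)⁻) := by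
    calc (1 : A)⁻ = (1 : A)⁻ * 1 := (mul_one _).symm
    _ = (1 : A)⁻ * ((1 : A)⁺ - (1 : A)⁻) := by rw [posPart_sub_negPart]
    _ = (1 : A)⁻ * (1 : A)⁺ - (1 : A)⁻ * (1 : A)⁻ := mul_sub _ _ _
    _ = -((1 : A)⁻ * (1 : A)⁻) := by rw [mul_comm, h, zero_sub]
  have h3 : (1 : A)⁻ ≤ 0 := by
    rw [h2]
    exact neg_nonpos.2 (hmp _ _ (negPart_nonneg _) (negPart_nonneg _))
  have h4 : (1 : A)⁻ = 0 := le_antisymm h3 (negPart_nonneg _)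
  have h5 : (1 : A)⁺ = 1 := by
    have := posPart_sub_negPart (1 : A)
    rwa [h4, sub_zero] at this
  rw [← h5]; exact posPart_nonneg _

lemma aux_weak_unit (hfalg : ∀ a b c : A, a ⊓ b = 0 → 0 ≤ c → (c * a) ⊓ b = 0)
    {u : A} (hu : 0 ≤ u) (h : u ⊓ 1 = 0) : u = 0 := by
  have h1 : (1 : A) ⊓ u = 0 := by rw [inf_comm]; exact h
  have h2 : (u * 1) ⊓ u = 0 := hfalg 1 u u h1 hu
  rwa [mul_one, inf_idem] at h2

lemma aux_abs_mul_le (hmp : ∀ a b : A, 0 ≤ a → 0 ≤ b → 0 ≤ a * b)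
    (a b : A) : |a * b| ≤ |a| * |b| := by
  have hpp : 0 ≤ a⁺ * b⁺ := hmp _ _ (posPart_nonneg _) (posPart_nonneg _)
  have hpn : 0 ≤ a⁺ * b⁻ := hmp _ _ (posPart_nonneg _) (negPart_nonneg _)
  have hnp : 0 ≤ a⁻ * b⁺ := hmp _ _ (negPart_nonneg _) (posPart_nonneg _)
  have hnn : 0 ≤ a⁻ * b⁻ := hmp _ _ (negPart_nonneg _) (negPart_nonneg _)
  have h1 : a * b ≤ |a| * |b| := by
    calc a * b = (a⁺ - a⁻) * (b⁺ - b⁻) := by rw [posPart_sub_negPart, posPart_sub_negPart]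
    _ = (a⁺ + a⁻) * (b⁺ + b⁻) - ((a⁺ * b⁻ + a⁻ * b⁺) + (a⁺ * b⁻ + a⁻ * b⁺)) := by ring
    _ ≤ (a⁺ + a⁻) * (b⁺ + b⁻) :=
        sub_le_self _ (add_nonneg (add_nonneg hpn hnp) (add_nonneg hpn hnp))
    _ = |a| * |b| := by rw [posPart_add_negPart, posPart_add_negPart]
  have h2 : -(a * b) ≤ |a| * |b| := by
    calc -(a * b) = -((a⁺ - a⁻) * (b⁺ - b⁻)) := by rw [posPart_sub_negPart, posPart_sub_negPart]
    _ = (a⁺ + a⁻) * (b⁺ + b⁻) - ((a⁺ * b⁺ + a⁻ * b⁻) + (a⁺ * b⁺ + a⁻ * b⁻)) := by ring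
    _ ≤ (a⁺ + a⁻) * (b⁺ + b⁻) :=
        sub_le_self _ (add_nonneg (add_nonneg hpp hnn) (add_nonneg hpp hnn))
    _ = |a| * |b| := by rw [posPart_add_negPart, posPart_add_negPart]
  exact abs_le'.2 ⟨h1, h2⟩

lemma aux_abs_smul_le (hsp : ∀ (r : ℝ) (a : A), 0 ≤ r → 0 ≤ a → 0 ≤ r • a)
    {r : ℝ} (hr : 0 ≤ r) (w : A) : |r • w| ≤ r • |w| := by
  refine abs_le'.2 ⟨aux_smul_mono hsp hr (le_abs_self w), ?_⟩
  rw [← smul_neg]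
  exact aux_smul_mono hsp hr (neg_le_abs w)

lemma aux_inf_add_le {a b c : A} (ha : 0 ≤ a) (hb : 0 ≤ b) (hc : 0 ≤ c) :
    (a + b) ⊓ c ≤ a ⊓ c + b ⊓ c := by
  have h1 : (a + b) ⊓ c ≤ a ⊓ c + b := by
    have : a ⊓ c + b = (a + b) ⊓ (c + b) := inf_add a c b
    rw [this]
    exact inf_le_inf_left _ (le_add_of_nonneg_right hb)
  have h2 : (a + b) ⊓ c ≤ a ⊓ c + c :=
    inf_le_right.trans (le_add_of_nonneg_left (le_inf ha hc))
  have := le_inf h1 h2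
  rwa [← add_inf] at this

lemma aux_sum_nonneg (w : ℕ → A) (hw : ∀ k, 0 ≤ w k) (m : ℕ) :
    0 ≤ ∑ k ∈ Finset.range m, w k := by
  induction m with
  | zero => simp
  | succ m ih => rw [Finset.sum_range_succ]; exact add_nonneg ih (hw m)

lemma aux_sum_inf_le (w : ℕ → A) (c : A) (hc : 0 ≤ c) (hw : ∀ k, 0 ≤ w k) :
    ∀ m : ℕ, (∑ k ∈ Finset.range m, w k) ⊓ c ≤ ∑ k ∈ Finset.range m, (w k ⊓ c) := by
  intro m
  induction m with
  | zero => simp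
  | succ m ih =>
    rw [Finset.sum_range_succ, Finset.sum_range_succ]
    calc (∑ k ∈ Finset.range m, w k + w m) ⊓ c
        ≤ (∑ k ∈ Finset.range m, w k) ⊓ c + w m ⊓ c :=
          aux_inf_add_le (aux_sum_nonneg w hw m) (hw m) hc
    _ ≤ ∑ k ∈ Finset.range m, (w k ⊓ c) + w m ⊓ c := add_le_add_left ih _

lemma aux_abs_sum_le (w : ℕ → A) (m : ℕ) :
    |∑ k ∈ Finset.range m, w k| ≤ ∑ k ∈ Finset.range m, |w k| := by
  induction m with
  | zero => simp
  | succ m ih =>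
    rw [Finset.sum_range_succ, Finset.sum_range_succ]
    exact (abs_add_le _ _).trans (add_le_add_left ih _)

lemma aux_disjoint_sum_bound (w : ℕ → A) (c : A) (hc : 0 ≤ c) (m : ℕ)
    (hb : ∀ k, k < m → |w k| ≤ c)
    (hd : ∀ j k, j < k → k < m → |w j| ⊓ |w k| = 0) :
    |∑ k ∈ Finset.range m, w k| ≤ c := by
  induction m with
  | zero => simpa using hc
  | succ m ih =>
    rw [Finset.sum_range_succ]
    have hS : |∑ k ∈ Finset.range m, w k| ⊓ |w m| = 0 := by
      refine le_antisymm ?_ (le_inf (abs_nonneg _) (abs_nonneg _))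
      calc |∑ k ∈ Finset.range m, w k| ⊓ |w m|
          ≤ (∑ k ∈ Finset.range m, |w k|) ⊓ |w m| :=
            inf_le_inf_right _ (aux_abs_sum_le w m)
      _ ≤ ∑ k ∈ Finset.range m, (|w k| ⊓ |w m|) :=
            aux_sum_inf_le (fun k => |w k|) |w m| (abs_nonneg _) (fun k => abs_nonneg _) m
      _ = 0 := Finset.sum_eq_zero fun k hk =>
            hd k m (Finset.mem_range.1 hk) (Nat.lt_succ_self m)
    have habs : |∑ k ∈ Finset.range m, w k + w m|
        ≤ |∑ k ∈ Finset.range m, w k| ⊔ |w m| := by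
      calc |∑ k ∈ Finset.range m, w k + w m|
          ≤ |∑ k ∈ Finset.range m, w k| + |w m| := by exact abs_add_le _ _
      _ = |∑ k ∈ Finset.range m, w k| ⊓ |w m| + (|∑ k ∈ Finset.range m, w k| ⊔ |w m|) :=
            (inf_add_sup _ _).symm
      _ = |∑ k ∈ Finset.range m, w k| ⊔ |w m| := by rw [hS, zero_add]
    exact habs.trans (sup_le (ih (fun k hk => hb k (hk.trans (Nat.lt_succ_self m)))
      (fun j k hjk hkm => hd j k hjk (hkm.trans (Nat.lt_succ_self m))))
      (hb m (Nat.lt_succ_self m)))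

lemma aux_posPart_sub (c : A) (hc : 0 ≤ c) (a : A) : (a - c)⁺ = (a⁺ - c)⁺ := by
  have h1 : (a⁺ - c)⁺ = ((a - c) ⊔ (0 - c))⁺ := by
    rw [posPart_def a, sup_sub]
  have h2 : ((a - c) ⊔ (0 - c))⁺ = (a - c)⁺ ⊔ (0 - c)⁺ := by
    rw [posPart_def, posPart_def, posPart_def, sup_sup_sup_comm, sup_idem]
  have h3 : (0 - c)⁺ = 0 := posPart_eq_zero.2 (by rwa [zero_sub, neg_nonpos])
  rw [h1, h2, h3, sup_eq_left.2 (posPart_nonneg _)]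

lemma aux_sub_posPart_eq_inf (u c : A) : u - (u - c)⁺ = u ⊓ c := by
  rw [posPart_def, sub_sup, sub_sub_cancel, sub_zero, inf_comm]

end AuxPhi


section KeyPhi
variable {A : Type*} [CommRing A] [Lattice A] [Algebra ℝ A]
variable [AddLeftMono A] [AddRightMono A]

lemma aux_band_preserving (hmp : ∀ a b : A, 0 ≤ a → 0 ≤ b → 0 ≤ a * b)
    (hfalg : ∀ a b c : A, a ⊓ b = 0 → 0 ≤ c → (c * a) ⊓ b = 0)
    (T : A →ₗ[ℝ] A) (hloc : ∀ x : A, ∃ v, T x = x * v) :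
    IsBandPreserving T := by
  intro x y h
  obtain ⟨v, hv⟩ := hloc x
  have h1 : |T x| ≤ |v| * |x| := by
    rw [hv, mul_comm x v]
    exact aux_abs_mul_le hmp v x
  have h2 : (|v| * |x|) ⊓ |y| = 0 := hfalg |x| |y| |v| h (abs_nonneg v)
  exact le_antisymm (le_of_le_of_eq (inf_le_inf_right _ h1) h2)
    (le_inf (abs_nonneg _) (abs_nonneg _))

lemma aux_T_eq_zero
    (hsp : ∀ (r : ℝ) (a : A), 0 ≤ r → 0 ≤ a → 0 ≤ r • a)
    (hmp : ∀ a b : A, 0 ≤ a → 0 ≤ b → 0 ≤ a * b)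
    (hfalg : ∀ a b c : A, a ⊓ b = 0 → 0 ≤ c → (c * a) ⊓ b = 0)
    (harch : ∀ a b : A, 0 ≤ a → 0 ≤ b → (∀ n : ℕ, n • a ≤ b) → a = 0)
    (T : A →ₗ[ℝ] A) (hloc : ∀ x : A, ∃ v, T x = x * v)
    (hOB : IsOrderBounded T) (hT1 : T 1 = 0) : ∀ x : A, T x = 0 := by
  have he : (0 : A) ≤ 1 := aux_one_nonneg hmp hfalg
  obtain ⟨l, u, hlu⟩ := hOB (Set.Icc (-(1 : A)) 1) ⟨-(1 : A), 1, subset_rfl⟩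
  set b : A := ((-l) ⊔ u) ⊔ 0 with hbdef
  have hb0 : (0 : A) ≤ b := le_sup_right
  have hbound : ∀ w : A, -(1 : A) ≤ w → w ≤ 1 → |T w| ≤ b := by
    intro w h1 h2
    have hm : T w ∈ Set.Icc l u := hlu ⟨w, ⟨h1, h2⟩, rfl⟩
    have ha : T w ≤ (-l) ⊔ u := hm.2.trans le_sup_right
    have hb' : -(T w) ≤ (-l) ⊔ u := by
      have : -(T w) ≤ -l := neg_le_neg_iff.2 hm.1
      exact this.trans le_sup_left
    have h3 : |T w| ≤ (-l) ⊔ u := abs_le'.2 ⟨ha, hb'⟩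
    exact h3.trans le_sup_left
  have hTr1 : ∀ r : ℝ, T (r • (1 : A)) = 0 := fun r => by rw [map_smul, hT1, smul_zero]
  -- Step 1 : T vanishes on [0, 1]
  have step1 : ∀ y : A, 0 ≤ y → y ≤ 1 → T y = 0 := by
    intro y hy0 hy1
    have key : ∀ n : ℕ, 0 < n → (n : ℝ) • |T y| ≤ b := by
      intro n hn
      have hn' : (0 : ℝ) < (n : ℝ) := Nat.cast_pos.2 hn
      set ε : ℝ := (n : ℝ)⁻¹ with hε
      have hε0 : (0 : ℝ) ≤ ε := inv_nonneg.2 hn'.le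
      have hε1 : (0 : A) ≤ ε • 1 := hsp ε 1 hε0 he
      let g : ℕ → A := fun k => (y - ((k : ℝ) * ε) • (1 : A))⁺
      have hgdef : ∀ k, g k = (y - ((k : ℝ) * ε) • (1 : A))⁺ := fun _ => rfl
      have hgsucc : ∀ k : ℕ, g (k + 1) = (g k - ε • 1)⁺ := by
        intro k
        have harith : (((k + 1 : ℕ)) : ℝ) * ε = (k : ℝ) * ε + ε := by push_cast; ring
        rw [hgdef (k + 1), hgdef k, ← aux_posPart_sub _ hε1, harith, add_smul, ← sub_sub]
      have hganti : ∀ p q : ℕ, p ≤ q → g q ≤ g p := by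
        intro p q hpq
        rw [hgdef, hgdef]
        apply posPart_mono
        apply sub_le_sub_left
        have hr : (0 : ℝ) ≤ (q : ℝ) * ε - (p : ℝ) * ε := by
          have : (p : ℝ) ≤ (q : ℝ) := Nat.cast_le.2 hpq
          nlinarith
        have := hsp _ (1 : A) hr he
        rw [sub_smul] at this
        exact sub_nonneg.1 this
      let Y : ℕ → A := fun k => g k - g (k + 1)
      have hYdef : ∀ k, Y k = g k - g (k + 1) := fun _ => rfl
      have hY0 : ∀ k, 0 ≤ Y k := fun k => sub_nonneg.2 (hganti k (k + 1) (Nat.le_succ k))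
      have hYle : ∀ k, Y k ≤ ε • 1 := by
        intro k
        have h := le_posPart (g k - ε • 1)
        rw [← hgsucc k] at h
        exact sub_le_comm.1 h
      have hsum : ∑ k ∈ Finset.range n, Y k = y := by
        rw [Finset.sum_range_sub' g n]
        have hg0 : g 0 = y := by
          rw [hgdef 0]
          simp [posPart_eq_self.2 hy0]
        have hgn : g n = 0 := by
          rw [hgdef n, mul_inv_cancel₀ hn'.ne', one_smul]
          exact posPart_eq_zero.2 (sub_nonpos.2 hy1)
        rw [hg0, hgn, sub_zero]
      have hTY2 : ∀ k, ∃ u, T (Y k) = (Y k - ε • 1) * u := by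
        intro k
        obtain ⟨u, hu⟩ := hloc (Y k - ε • 1)
        refine ⟨u, ?_⟩
        have h : T (Y k - ε • 1) = T (Y k) := by
          rw [map_sub, hTr1, sub_zero]
        rw [← h, hu]
      have hTb : ∀ k, |T (Y k)| ≤ ε • b := by
        intro k
        have h0 : 0 ≤ (n : ℝ) • Y k := hsp _ _ hn'.le (hY0 k)
        have h1 : -(1 : A) ≤ (n : ℝ) • Y k := le_trans (neg_nonpos.2 he) h0
        have h2 : (n : ℝ) • Y k ≤ 1 := by
          have := aux_smul_mono hsp hn'.le (hYle k)
          rwa [smul_smul, mul_inv_cancel₀ hn'.ne', one_smul] at this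
        have h3 : |T ((n : ℝ) • Y k)| ≤ b := hbound _ h1 h2
        calc |T (Y k)| = |ε • T ((n : ℝ) • Y k)| := by
              rw [map_smul, smul_smul, inv_mul_cancel₀ hn'.ne', one_smul]
        _ ≤ ε • |T ((n : ℝ) • Y k)| := aux_abs_smul_le hsp hε0 _
        _ ≤ ε • b := aux_smul_mono hsp hε0 h3
      have hdisj : ∀ j k, j < k → k < n → |T (Y j)| ⊓ |T (Y k)| = 0 := by
        intro j k hjk hkn
        obtain ⟨u, hu⟩ := hTY2 j
        obtain ⟨v, hv⟩ := hloc (Y k)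
        have hYinf : Y j = g j ⊓ (ε • 1) := by
          have h := aux_sub_posPart_eq_inf (g j) (ε • 1)
          rw [← hgsucc j] at h
          rw [hYdef j, h]
        have hcdef : ε • 1 - Y j = (g j - ε • 1)⁻ := by
          rw [hYinf, sub_inf, sub_self, ← neg_sub (g j) (ε • 1), ← posPart_def, posPart_neg]
        have hck : Y k ≤ (g j - ε • 1)⁺ := by
          calc Y k ≤ g k := by
                rw [hYdef k]
                exact sub_le_self _ (posPart_nonneg _)
          _ ≤ g (j + 1) := hganti (j + 1) k (Nat.succ_le_of_lt hjk)
          _ = (g j - ε • 1)⁺ := hgsucc j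
        have hcc : (ε • 1 - Y j) ⊓ Y k = 0 := by
          refine le_antisymm ?_ (le_inf (sub_nonneg.2 (hYle j)) (hY0 k))
          calc (ε • 1 - Y j) ⊓ Y k ≤ (g j - ε • 1)⁻ ⊓ (g j - ε • 1)⁺ := by
                rw [hcdef]
                exact inf_le_inf_left _ hck
          _ = 0 := by rw [inf_comm]; exact posPart_inf_negPart_eq_zero _
        have h1 : (|u| * (ε • 1 - Y j)) ⊓ Y k = 0 := hfalg _ _ _ hcc (abs_nonneg u)
        have h1' : Y k ⊓ (|u| * (ε • 1 - Y j)) = 0 := by rw [inf_comm]; exact h1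
        have h2 : (|v| * Y k) ⊓ (|u| * (ε • 1 - Y j)) = 0 := hfalg _ _ _ h1' (abs_nonneg v)
        have hbj : |T (Y j)| ≤ |u| * (ε • 1 - Y j) := by
          rw [hu]
          calc |(Y j - ε • 1) * u| ≤ |Y j - ε • 1| * |u| := aux_abs_mul_le hmp _ _
          _ = (ε • 1 - Y j) * |u| := by
                rw [abs_of_nonpos (sub_nonpos.2 (hYle j)), neg_sub]
          _ = |u| * (ε • 1 - Y j) := mul_comm _ _
        have hbk : |T (Y k)| ≤ |v| * Y k := by
          rw [hv]
          calc |Y k * v| ≤ |Y k| * |v| := aux_abs_mul_le hmp _ _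
          _ = Y k * |v| := by rw [abs_of_nonneg (hY0 k)]
          _ = |v| * Y k := mul_comm _ _
        refine le_antisymm ?_ (le_inf (abs_nonneg _) (abs_nonneg _))
        calc |T (Y j)| ⊓ |T (Y k)| ≤ (|u| * (ε • 1 - Y j)) ⊓ (|v| * Y k) := inf_le_inf hbj hbk
        _ = 0 := by rw [inf_comm]; exact h2
      have hsumbound := aux_disjoint_sum_bound (fun k => T (Y k)) (ε • b)
        (hsp _ _ hε0 hb0) n (fun k _ => hTb k) hdisj
      have hTsum : T y = ∑ k ∈ Finset.range n, T (Y k) := by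
        rw [← hsum, map_sum]
      rw [← hTsum] at hsumbound
      calc (n : ℝ) • |T y| ≤ (n : ℝ) • (ε • b) := aux_smul_mono hsp hn'.le hsumbound
      _ = b := by rw [smul_smul, mul_inv_cancel₀ hn'.ne', one_smul]
    have habs0 : |T y| = 0 := by
      apply harch _ b (abs_nonneg _) hb0
      intro n
      cases n with
      | zero => simpa using hb0
      | succ n =>
        rw [← Nat.cast_smul_eq_nsmul ℝ]
        exact key (n + 1) (Nat.succ_pos n)
    have h1 : T y ≤ 0 := habs0 ▸ le_abs_self (T y)
    have h2 : -(T y) ≤ 0 := habs0 ▸ neg_le_abs (T y)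
    exact le_antisymm h1 (by simpa using h2)
  -- Step 2 : T vanishes on [0, r•1]
  have step2 : ∀ y : A, 0 ≤ y → ∀ r : ℝ, 0 < r → y ≤ r • 1 → T y = 0 := by
    intro y hy0 r hr hyr
    have h1 : 0 ≤ r⁻¹ • y := hsp _ _ (inv_nonneg.2 hr.le) hy0
    have h2 : r⁻¹ • y ≤ 1 := by
      have := aux_smul_mono hsp (inv_nonneg.2 hr.le) hyr
      rwa [smul_smul, inv_mul_cancel₀ hr.ne', one_smul] at this
    have h3 : T y = r • T (r⁻¹ • y) := by
      rw [← map_smul, smul_smul, mul_inv_cancel₀ hr.ne', one_smul]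
    rw [h3, step1 _ h1 h2, smul_zero]
  -- Step 3 : T vanishes on the positive cone
  have step3 : ∀ x : A, 0 ≤ x → T x = 0 := by
    intro x hx0
    have hz0 : 0 ≤ |T x| ⊓ 1 := le_inf (abs_nonneg _) he
    have hz1 : |T x| ⊓ 1 ≤ 1 := inf_le_right
    have hkey : ∀ m : ℕ, (m : ℝ) • (|T x| ⊓ 1) ≤ x := by
      intro m
      rcases Nat.eq_zero_or_pos m with hm | hm
      · subst hm; simpa using hx0
      have hm' : (0 : ℝ) < (m : ℝ) := Nat.cast_pos.2 hm
      have hxsplit : x = x ⊓ ((m : ℝ) • 1) + (x - (m : ℝ) • 1)⁺ := by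
        rw [← aux_sub_posPart_eq_inf x ((m : ℝ) • 1)]
        ring
      have hTxm : T (x ⊓ ((m : ℝ) • 1)) = 0 :=
        step2 _ (le_inf hx0 (hsp _ _ hm'.le he)) (m : ℝ) hm' inf_le_right
      have hTx : T x = T ((x - (m : ℝ) • 1)⁺) := by
        conv_lhs => rw [hxsplit]
        rw [map_add, hTxm, zero_add]
      obtain ⟨v, hv⟩ := hloc ((x - (m : ℝ) • 1)⁺)
      have hzle : |T x| ⊓ 1 ≤ |v| * (x - (m : ℝ) • 1)⁺ := by
        calc |T x| ⊓ 1 ≤ |T x| := inf_le_left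
        _ = |(x - (m : ℝ) • 1)⁺ * v| := by rw [hTx, hv]
        _ ≤ |(x - (m : ℝ) • 1)⁺| * |v| := aux_abs_mul_le hmp _ _
        _ = |v| * (x - (m : ℝ) • 1)⁺ := by
              rw [abs_of_nonneg (posPart_nonneg _), mul_comm]
      have hdisj : (|T x| ⊓ 1) ⊓ (x - (m : ℝ) • 1)⁻ = 0 := by
        refine le_antisymm ?_ (le_inf hz0 (negPart_nonneg _))
        calc (|T x| ⊓ 1) ⊓ (x - (m : ℝ) • 1)⁻
            ≤ (|v| * (x - (m : ℝ) • 1)⁺) ⊓ (x - (m : ℝ) • 1)⁻ := inf_le_inf_right _ hzle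
        _ = 0 := hfalg _ _ _ (posPart_inf_negPart_eq_zero _) (abs_nonneg v)
      have hzc : (|T x| ⊓ 1) * (x - (m : ℝ) • 1)⁻ = 0 :=
        aux_mul_eq_zero hfalg hz0 (negPart_nonneg _) hdisj
      have h1 : (|T x| ⊓ 1) * ((m : ℝ) • 1) ≤ (|T x| ⊓ 1) * x := by
        rw [← sub_nonneg, ← mul_sub]
        have h : x - (m : ℝ) • 1 = (x - (m : ℝ) • 1)⁺ - (x - (m : ℝ) • 1)⁻ :=
          (posPart_sub_negPart _).symm
        rw [h, mul_sub, hzc, sub_zero]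
        exact hmp _ _ hz0 (posPart_nonneg _)
      have h2 : (|T x| ⊓ 1) * x ≤ 1 * x := by
        rw [← sub_nonneg, ← sub_mul]
        exact hmp _ _ (sub_nonneg.2 hz1) hx0
      calc (m : ℝ) • (|T x| ⊓ 1) = (|T x| ⊓ 1) * ((m : ℝ) • 1) := by
            rw [mul_smul_comm, mul_one]
      _ ≤ (|T x| ⊓ 1) * x := h1
      _ ≤ 1 * x := h2
      _ = x := one_mul x
    have hz : |T x| ⊓ 1 = 0 := harch _ x hz0 hx0 (fun n => by
      rw [← Nat.cast_smul_eq_nsmul ℝ]; exact hkey n)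
    have habs : |T x| = 0 := aux_weak_unit hfalg (abs_nonneg _) hz
    have h1 : T x ≤ 0 := habs ▸ le_abs_self (T x)
    have h2 : -(T x) ≤ 0 := habs ▸ neg_le_abs (T x)
    exact le_antisymm h1 (by simpa using h2)
  intro x
  have hx : x = x⁺ - x⁻ := (posPart_sub_negPart x).symm
  rw [hx, map_sub, step3 _ (posPart_nonneg _), step3 _ (negPart_nonneg _), sub_zero]

lemma aux_multiplier
    (hsp : ∀ (r : ℝ) (a : A), 0 ≤ r → 0 ≤ a → 0 ≤ r • a)
    (hmp : ∀ a b : A, 0 ≤ a → 0 ≤ b → 0 ≤ a * b)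
    (hfalg : ∀ a b c : A, a ⊓ b = 0 → 0 ≤ c → (c * a) ⊓ b = 0)
    (harch : ∀ a b : A, 0 ≤ a → 0 ≤ b → (∀ n : ℕ, n • a ≤ b) → a = 0)
    (hW : IsWickstead A)
    (T : A →ₗ[ℝ] A) (hloc : ∀ x : A, ∃ v, T x = x * v) :
    ∀ x : A, T x = T 1 * x := by
  set D : A →ₗ[ℝ] A := T - LinearMap.mulLeft ℝ (T 1) with hD
  have hDapp : ∀ x : A, D x = T x - T 1 * x := fun x => by
    simp [hD, LinearMap.mulLeft_apply]
  have hlocD : ∀ x : A, ∃ v, D x = x * v := by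
    intro x
    obtain ⟨v, hv⟩ := hloc x
    exact ⟨v - T 1, by rw [hDapp, hv, mul_sub, mul_comm x (T 1)]⟩
  have hD1 : D 1 = 0 := by rw [hDapp, mul_one, sub_self]
  have hOB : IsOrderBounded D := hW D (aux_band_preserving hmp hfalg D hlocD)
  have hz := aux_T_eq_zero hsp hmp hfalg harch D hlocD hOB hD1
  intro x
  have h := hz x
  rw [hDapp] at h
  exact sub_eq_zero.1 h

end KeyPhi


/-- Let `A` be a φ-algebra (an Archimedean `f`-algebra with multiplicative
identity `e = 1`). If `A` is a Wickstead algebra (every band preserving linear operator on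
`A` is order bounded), then `A` is a Kadison algebra (every local 2-multiplier on `A²` is a
2-multiplier). -/
theorem isKadison_of_isWickstead (A : Type*) [CommRing A] [Lattice A] [Algebra ℝ A]
    (hadd : ∀ a b c : A, a ≤ b → a + c ≤ b + c)
    (hsmulpos : ∀ (r : ℝ) (a : A), 0 ≤ r → 0 ≤ a → 0 ≤ r • a)
    (hmulpos : ∀ a b : A, 0 ≤ a → 0 ≤ b → 0 ≤ a * b)
    (hfalg : ∀ a b c : A, a ⊓ b = 0 → 0 ≤ c → (c * a) ⊓ b = 0)
    (harch : ∀ a b : A, 0 ≤ a → 0 ≤ b → (∀ n : ℕ, n • a ≤ b) → a = 0)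
    (hW : IsWickstead A) :
    IsKadison A := by
  haveI i1 : AddLeftMono A := ⟨fun c a b h => by simpa [add_comm] using hadd a b c h⟩
  haveI i2 : AddRightMono A := ⟨fun c a b h => hadd a b c h⟩
  intro Ψ hL a
  constructor
  · have hloc : ∀ x : A, ∃ v, Ψ a x = x * v := by
      intro x
      obtain ⟨Ψ', h2, he⟩ := hL a x
      refine ⟨a * Ψ' 1 1, ?_⟩
      have e1 : Ψ' a x = x * Ψ' a 1 := by
        have := (h2 a).1 x 1
        rwa [mul_one] at this
      have e2 : Ψ' a 1 = a * Ψ' 1 1 := by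
        have := (h2 1).2 a 1
        rwa [mul_one] at this
      rw [he, e1, e2]
    have hmul := aux_multiplier hsmulpos hmulpos hfalg harch hW (Ψ a) hloc
    intro x y
    rw [hmul (x * y), hmul y]
    ring
  · have hloc : ∀ x : A, ∃ v, Ψ.flip a x = x * v := by
      intro x
      obtain ⟨Ψ', h2, he⟩ := hL x a
      refine ⟨a * Ψ' 1 1, ?_⟩
      have e1 : Ψ' x a = a * Ψ' x 1 := by
        have := (h2 x).1 a 1
        rwa [mul_one] at this
      have e2 : Ψ' x 1 = x * Ψ' 1 1 := by
        have := (h2 1).2 x 1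
        rwa [mul_one] at this
      rw [LinearMap.flip_apply, he, e1, e2]
      ring
    have hmul := aux_multiplier hsmulpos hmulpos hfalg harch hW (Ψ.flip a) hloc
    intro x y
    have q1 := hmul (x * y)
    have q2 := hmul y
    simp only [LinearMap.flip_apply] at q1 q2
    rw [q1, q2]
    ring
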